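/- In type D_n, four positive roots form a coplanar quadruple (a mutually orthogonal set summing to twice a root) if and only if they are of the form {ε_i + ε_j, ε_i − ε_j, ε_k + ε_l, ε_k − ε_l} for four distinct indices i, j, k, l with i < j and k < l. -/

import Mathlib

variable {n : ℕ}

private lemma sum_ite_ite' (a c : Fin n) :
    (∑ x, (if x = a then (1:ℝ) else 0) * (if x = c then (1:ℝ) else 0)) = if a = c then 1 else 0 := by
  simp only [ite_mul, one_mul, zero_mul]
  simp [Finset.sum_ite_eq]

private lemma eval_root' (i j x : Fin n) (s : ℝ) :
    ((Pi.single i 1 : Fin n → ℝ) + s • (Pi.single j 1 : Fin n → ℝ)) x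
      = (if x = i then 1 else 0) + s * (if x = j then 1 else 0) := by
  simp [Pi.single_apply]

private lemma dot_roots' (i j k l : Fin n) (s t : ℝ) :
    (∑ x, ((Pi.single i 1 : Fin n → ℝ) + s • (Pi.single j 1 : Fin n → ℝ)) x *
        ((Pi.single k 1 : Fin n → ℝ) + t • (Pi.single l 1 : Fin n → ℝ)) x)
    = (if i = k then 1 else 0) + t * (if i = l then 1 else 0)
      + s * (if j = k then 1 else 0) + s * t * (if j = l then 1 else 0) := by
  have : ∀ x : Fin n, ((Pi.single i 1 : Fin n → ℝ) + s • (Pi.single j 1 : Fin n → ℝ)) x *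
        ((Pi.single k 1 : Fin n → ℝ) + t • (Pi.single l 1 : Fin n → ℝ)) x
      = (if x = i then (1:ℝ) else 0) * (if x = k then 1 else 0)
        + t * ((if x = i then 1 else 0) * (if x = l then 1 else 0))
        + s * ((if x = j then 1 else 0) * (if x = k then 1 else 0))
        + s * t * ((if x = j then 1 else 0) * (if x = l then 1 else 0)) := by
    intro x; rw [eval_root', eval_root']; ring
  rw [Finset.sum_congr rfl fun x _ => this x]
  rw [Finset.sum_add_distrib, Finset.sum_add_distrib, Finset.sum_add_distrib,
    ← Finset.mul_sum, ← Finset.mul_sum, ← Finset.mul_sum,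
    sum_ite_ite', sum_ite_ite', sum_ite_ite', sum_ite_ite']

private lemma orth_struct' (i j k l : Fin n) (s t : ℝ) (hij : i < j) (hkl : k < l)
    (hs : s = 1 ∨ s = -1) (ht : t = 1 ∨ t = -1)
    (h : (if i = k then (1:ℝ) else 0) + t * (if i = l then 1 else 0)
      + s * (if j = k then 1 else 0) + s * t * (if j = l then 1 else 0) = 0) :
    (i ≠ k ∧ i ≠ l ∧ j ≠ k ∧ j ≠ l) ∨ (i = k ∧ j = l ∧ s = -t) := by
  rcases eq_or_ne i k with hik | hik
  · have hil : i ≠ l := ne_of_lt (hik ▸ hkl)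
    have hjk : j ≠ k := (hik ▸ hij).ne'
    rcases eq_or_ne j l with hjl | hjl
    · right
      refine ⟨hik, hjl, ?_⟩
      simp [hik, hil, hjk, hjl, hkl.ne, hkl.ne'] at h
      rcases hs with rfl | rfl <;> rcases ht with rfl | rfl <;> norm_num at h <;> norm_num
    · exfalso; simp [hik, hil, hjk, hjl, hkl.ne, hkl.ne'] at h
  · rcases eq_or_ne i l with hil | hil
    · have hjk : j ≠ k := ne_of_gt (lt_trans (hil ▸ hkl) hij)
      have hjl : j ≠ l := ne_of_gt (hil ▸ hij)
      exfalso
      simp [hik, hil, hjk, hjl, hkl.ne, hkl.ne'] at h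
      rcases ht with rfl | rfl <;> norm_num at h
    · rcases eq_or_ne j k with hjk | hjk
      · have hjl : j ≠ l := ne_of_lt (hjk ▸ hkl)
        exfalso
        simp [hik, hil, hjk, hjl, hkl.ne, hkl.ne'] at h
        rcases hs with rfl | rfl <;> norm_num at h
      · rcases eq_or_ne j l with hjl | hjl
        · exfalso
          simp [hik, hil, hjk, hjl, hkl.ne, hkl.ne'] at h
          rcases hs with rfl | rfl <;> rcases ht with rfl | rfl <;> norm_num at h
        · exact Or.inl ⟨hik, hil, hjk, hjl⟩

private lemma pair_set' (i j : Fin n) (s : ℝ) (hs : s = 1 ∨ s = -1) :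
    ({(Pi.single i 1 : Fin n → ℝ) + s • (Pi.single j 1 : Fin n → ℝ),
      (Pi.single i 1 : Fin n → ℝ) + (-s) • (Pi.single j 1 : Fin n → ℝ)} : Set (Fin n → ℝ))
    = {(Pi.single i 1 : Fin n → ℝ) + Pi.single j 1,
       (Pi.single i 1 : Fin n → ℝ) - Pi.single j 1} := by
  have h1 : (Pi.single i 1 : Fin n → ℝ) + (1:ℝ) • (Pi.single j 1 : Fin n → ℝ)
      = Pi.single i 1 + Pi.single j 1 := by module
  have h2 : (Pi.single i 1 : Fin n → ℝ) + (-1:ℝ) • (Pi.single j 1 : Fin n → ℝ)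
      = Pi.single i 1 - Pi.single j 1 := by module
  rcases hs with rfl | rfl
  · rw [h1, show -(1:ℝ) = (-1 : ℝ) by norm_num, h2]
  · rw [h2, show -(-1:ℝ) = (1 : ℝ) by norm_num, h1, Set.pair_comm]

private lemma build' (i j k l : Fin n) (sA sB : ℝ) (hsA : sA = 1 ∨ sA = -1)
    (hsB : sB = 1 ∨ sB = -1)
    (w x y z : Fin n → ℝ)
    (hw : w = (Pi.single i 1 : Fin n → ℝ) + sA • (Pi.single j 1 : Fin n → ℝ))
    (hx : x = (Pi.single i 1 : Fin n → ℝ) + (-sA) • (Pi.single j 1 : Fin n → ℝ))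
    (hy : y = (Pi.single k 1 : Fin n → ℝ) + sB • (Pi.single l 1 : Fin n → ℝ))
    (hz : z = (Pi.single k 1 : Fin n → ℝ) + (-sB) • (Pi.single l 1 : Fin n → ℝ)) :
    ({w, x, y, z} : Set (Fin n → ℝ)) =
      {(Pi.single i 1 : Fin n → ℝ) + Pi.single j 1,
       (Pi.single i 1 : Fin n → ℝ) - Pi.single j 1,
       (Pi.single k 1 : Fin n → ℝ) + Pi.single l 1,
       (Pi.single k 1 : Fin n → ℝ) - Pi.single l 1} := by
  have e1 : ({w, x, y, z} : Set (Fin n → ℝ)) = ({w, x} : Set (Fin n → ℝ)) ∪ {y, z} := by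
    ext a; simp only [Set.mem_insert_iff, Set.mem_singleton_iff, Set.mem_union]; tauto
  have e2 : ({(Pi.single i 1 : Fin n → ℝ) + Pi.single j 1,
       (Pi.single i 1 : Fin n → ℝ) - Pi.single j 1,
       (Pi.single k 1 : Fin n → ℝ) + Pi.single l 1,
       (Pi.single k 1 : Fin n → ℝ) - Pi.single l 1} : Set (Fin n → ℝ))
      = ({(Pi.single i 1 : Fin n → ℝ) + Pi.single j 1,
       (Pi.single i 1 : Fin n → ℝ) - Pi.single j 1} : Set (Fin n → ℝ)) ∪
        {(Pi.single k 1 : Fin n → ℝ) + Pi.single l 1,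
       (Pi.single k 1 : Fin n → ℝ) - Pi.single l 1} := by
    ext a; simp only [Set.mem_insert_iff, Set.mem_singleton_iff, Set.mem_union]; tauto
  rw [e1, e2, hw, hx, hy, hz, pair_set' i j sA hsA, pair_set' k l sB hsB]

private lemma no_lonely' (g : ℝ) (hg : g = 0 ∨ g = 1 ∨ g = -1) (h : (1:ℝ) = 2 * g) : False := by
  rcases hg with rfl | rfl | rfl <;> norm_num at h

private lemma root_form' (v : Fin n → ℝ)
    (h : ∃ i j : Fin n, i < j ∧
      (v = (Pi.single i 1 : Fin n → ℝ) + (Pi.single j 1 : Fin n → ℝ) ∨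
       v = (Pi.single i 1 : Fin n → ℝ) - (Pi.single j 1 : Fin n → ℝ))) :
    ∃ (i j : Fin n) (s : ℝ), i < j ∧ (s = 1 ∨ s = -1) ∧
      v = (Pi.single i 1 : Fin n → ℝ) + s • (Pi.single j 1 : Fin n → ℝ) := by
  obtain ⟨i, j, hij, hv | hv⟩ := h
  · exact ⟨i, j, 1, hij, Or.inl rfl, by rw [hv]; module⟩
  · exact ⟨i, j, -1, hij, Or.inr rfl, by rw [hv]; module⟩

set_option maxHeartbeats 4000000 in
theorem stmt4 (n : ℕ)
    (Pos : Set (Fin n → ℝ))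
    (hPos : Pos = {v | ∃ i j : Fin n, i < j ∧
      (v = (Pi.single i 1 : Fin n → ℝ) + (Pi.single j 1 : Fin n → ℝ) ∨
       v = (Pi.single i 1 : Fin n → ℝ) - (Pi.single j 1 : Fin n → ℝ))})
    (Φ : Set (Fin n → ℝ))
    (hΦ : Φ = {v | ∃ (i j : Fin n) (s t : ℝ), i < j ∧ (s = 1 ∨ s = -1) ∧ (t = 1 ∨ t = -1) ∧
      v = s • (Pi.single i 1 : Fin n → ℝ) + t • (Pi.single j 1 : Fin n → ℝ)})
    (b : Fin 4 → (Fin n → ℝ)) (hb : ∀ m, b m ∈ Pos) (hdist : Function.Injective b) :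
    ((∀ p q, p ≠ q → (∑ m, b p m * b q m) = 0) ∧
      ∃ γ ∈ Φ, b 0 + b 1 + b 2 + b 3 = (2 : ℝ) • γ) ↔
    (∃ i j k l : Fin n, i < j ∧ k < l ∧ i ≠ k ∧ i ≠ l ∧ j ≠ k ∧ j ≠ l ∧
      ({b 0, b 1, b 2, b 3} : Set (Fin n → ℝ)) =
        {(Pi.single i 1 : Fin n → ℝ) + (Pi.single j 1 : Fin n → ℝ),
         (Pi.single i 1 : Fin n → ℝ) - (Pi.single j 1 : Fin n → ℝ),
         (Pi.single k 1 : Fin n → ℝ) + (Pi.single l 1 : Fin n → ℝ),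
         (Pi.single k 1 : Fin n → ℝ) - (Pi.single l 1 : Fin n → ℝ)}) := by
  classical
  constructor
  · rintro ⟨horth, γ, hγ, hsum⟩
    obtain ⟨i0, j0, s0, hij0, hs0, hb0⟩ := root_form' (b 0) (by have := hb 0; rwa [hPos] at this)
    obtain ⟨i1, j1, s1, hij1, hs1, hb1⟩ := root_form' (b 1) (by have := hb 1; rwa [hPos] at this)
    obtain ⟨i2, j2, s2, hij2, hs2, hb2⟩ := root_form' (b 2) (by have := hb 2; rwa [hPos] at this)
    obtain ⟨i3, j3, s3, hij3, hs3, hb3⟩ := root_form' (b 3) (by have := hb 3; rwa [hPos] at this)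
    have orth : ∀ (p q : Fin 4) (ip jp iq jq : Fin n) (sp sq : ℝ), p ≠ q →
        ip < jp → iq < jq → (sp = 1 ∨ sp = -1) → (sq = 1 ∨ sq = -1) →
        b p = (Pi.single ip 1 : Fin n → ℝ) + sp • (Pi.single jp 1 : Fin n → ℝ) →
        b q = (Pi.single iq 1 : Fin n → ℝ) + sq • (Pi.single jq 1 : Fin n → ℝ) →
        (ip ≠ iq ∧ ip ≠ jq ∧ jp ≠ iq ∧ jp ≠ jq) ∨ (ip = iq ∧ jp = jq ∧ sp = -sq) := by
      intro p q ip jp iq jq sp sq hpq h1 h2 h3 h4 h5 h6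
      have h0 := horth p q hpq
      rw [h5, h6, dot_roots'] at h0
      exact orth_struct' ip jp iq jq sp sq h1 h2 h3 h4 h0
    have h01 := orth 0 1 i0 j0 i1 j1 s0 s1 (by decide) hij0 hij1 hs0 hs1 hb0 hb1
    have h02 := orth 0 2 i0 j0 i2 j2 s0 s2 (by decide) hij0 hij2 hs0 hs2 hb0 hb2
    have h03 := orth 0 3 i0 j0 i3 j3 s0 s3 (by decide) hij0 hij3 hs0 hs3 hb0 hb3
    have h12 := orth 1 2 i1 j1 i2 j2 s1 s2 (by decide) hij1 hij2 hs1 hs2 hb1 hb2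
    have h13 := orth 1 3 i1 j1 i3 j3 s1 s3 (by decide) hij1 hij3 hs1 hs3 hb1 hb3
    have h23 := orth 2 3 i2 j2 i3 j3 s2 s3 (by decide) hij2 hij3 hs2 hs3 hb2 hb3
    rw [hΦ] at hγ
    obtain ⟨u, v, su, tv, huv, hsu, htv, rfl⟩ := hγ
    have hγ3 : ∀ x : Fin n, (su * (if x = u then (1:ℝ) else 0) + tv * (if x = v then 1 else 0)) = 0
        ∨ (su * (if x = u then (1:ℝ) else 0) + tv * (if x = v then 1 else 0)) = 1
        ∨ (su * (if x = u then (1:ℝ) else 0) + tv * (if x = v then 1 else 0)) = -1 := by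
      intro x
      rcases eq_or_ne x u with rfl | hxu
      · have hne : x ≠ v := huv.ne
        simp only [if_pos rfl, if_neg hne, mul_one, mul_zero, add_zero]
        rcases hsu with rfl | rfl <;> norm_num
      · rcases eq_or_ne x v with rfl | hxv
        · simp only [if_neg hxu, if_pos rfl, mul_one, mul_zero, zero_add]
          rcases htv with rfl | rfl <;> norm_num
        · left; simp [hxu, hxv]
    have hcoord : ∀ x : Fin n, b 0 x + b 1 x + b 2 x + b 3 x
        = 2 * (su * (if x = u then (1:ℝ) else 0) + tv * (if x = v then 1 else 0)) := by
      intro x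
      have := congrFun hsum x
      simpa only [Pi.add_apply, Pi.smul_apply, smul_eq_mul, Pi.single_apply] using this
    have killer : ∀ x : Fin n, b 0 x + b 1 x + b 2 x + b 3 x = 1 → False := by
      intro x hx
      have h := hcoord x
      rw [hx] at h
      exact no_lonely' _ (hγ3 x) h
    rcases h01 with d01 | m01
    · rcases h02 with d02 | m02
      · rcases h03 with d03 | m03
        · -- all disjoint from b0 : contradiction at i0
          exfalso
          have o0 : b 0 i0 = 1 := by rw [hb0, eval_root']; simp [hij0.ne]
          have z1 : b 1 i0 = 0 := by rw [hb1, eval_root']; simp [d01.1, d01.2.1]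
          have z2 : b 2 i0 = 0 := by rw [hb2, eval_root']; simp [d02.1, d02.2.1]
          have z3 : b 3 i0 = 0 := by rw [hb3, eval_root']; simp [d03.1, d03.2.1]
          exact killer i0 (by rw [o0, z1, z2, z3]; ring)
        · -- (0,3) matched; need (1,2) matched
          rcases h12 with d12 | m12
          · -- b1 lonely at i1
            exfalso
            have o1 : b 1 i1 = 1 := by rw [hb1, eval_root']; simp [hij1.ne]
            have z0 : b 0 i1 = 0 := by
              rw [hb0, eval_root']; simp [Ne.symm d01.1, Ne.symm d01.2.2.1]
            have z2 : b 2 i1 = 0 := by rw [hb2, eval_root']; simp [d12.1, d12.2.1]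
            have z3 : b 3 i1 = 0 := by
              rw [hb3, eval_root']
              simp [← m03.1, ← m03.2.1, Ne.symm d01.1, Ne.symm d01.2.2.1]
            exact killer i1 (by rw [o1, z0, z2, z3]; ring)
          · -- pattern C : (0,3), (1,2)
            refine ⟨i0, j0, i1, j1, hij0, hij1, d01.1, d01.2.1, d01.2.2.1, d01.2.2.2, ?_⟩
            have hre : ({b 0, b 1, b 2, b 3} : Set (Fin n → ℝ)) = {b 0, b 3, b 1, b 2} := by
              rw [Set.pair_comm (b 2) (b 3), Set.insert_comm (b 1) (b 3)]
            rw [hre]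
            exact build' i0 j0 i1 j1 s0 s1 hs0 hs1 (b 0) (b 3) (b 1) (b 2) hb0
              (by rw [hb3, ← m03.1, ← m03.2.1, show -s0 = s3 by linarith [m03.2.2]])
              hb1
              (by rw [hb2, ← m12.1, ← m12.2.1, show -s1 = s2 by linarith [m12.2.2]])
      · -- (0,2) matched; need (1,3) matched
        rcases h13 with d13 | m13
        · -- b1 lonely at i1
          exfalso
          have o1 : b 1 i1 = 1 := by rw [hb1, eval_root']; simp [hij1.ne]
          have z0 : b 0 i1 = 0 := by
            rw [hb0, eval_root']; simp [Ne.symm d01.1, Ne.symm d01.2.2.1]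
          have z2 : b 2 i1 = 0 := by
            rw [hb2, eval_root']
            simp [← m02.1, ← m02.2.1, Ne.symm d01.1, Ne.symm d01.2.2.1]
          have z3 : b 3 i1 = 0 := by rw [hb3, eval_root']; simp [d13.1, d13.2.1]
          exact killer i1 (by rw [o1, z0, z2, z3]; ring)
        · -- pattern B : (0,2), (1,3)
          refine ⟨i0, j0, i1, j1, hij0, hij1, d01.1, d01.2.1, d01.2.2.1, d01.2.2.2, ?_⟩
          have hre : ({b 0, b 1, b 2, b 3} : Set (Fin n → ℝ)) = {b 0, b 2, b 1, b 3} := by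
            rw [Set.insert_comm (b 1) (b 2)]
          rw [hre]
          exact build' i0 j0 i1 j1 s0 s1 hs0 hs1 (b 0) (b 2) (b 1) (b 3) hb0
            (by rw [hb2, ← m02.1, ← m02.2.1, show -s0 = s2 by linarith [m02.2.2]])
            hb1
            (by rw [hb3, ← m13.1, ← m13.2.1, show -s1 = s3 by linarith [m13.2.2]])
    · -- (0,1) matched
      rcases h23 with d23 | m23
      · -- b2 lonely at i2 (after ruling out (0,2) matched)
        exfalso
        rcases h02 with d02 | m02
        · have o2 : b 2 i2 = 1 := by rw [hb2, eval_root']; simp [hij2.ne]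
          have z0 : b 0 i2 = 0 := by
            rw [hb0, eval_root']; simp [Ne.symm d02.1, Ne.symm d02.2.2.1]
          have z1 : b 1 i2 = 0 := by
            rw [hb1, eval_root']
            simp [← m01.1, ← m01.2.1, Ne.symm d02.1, Ne.symm d02.2.2.1]
          have z3 : b 3 i2 = 0 := by rw [hb3, eval_root']; simp [d23.1, d23.2.1]
          exact killer i2 (by rw [o2, z0, z1, z3]; ring)
        · -- b1 = b2, contradiction
          have hbb : b 1 = b 2 := by
            rw [hb1, hb2, ← m01.1, ← m01.2.1, ← m02.1, ← m02.2.1,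
              show s1 = s2 by linarith [m01.2.2, m02.2.2]]
          exact absurd (hdist hbb) (by decide)
      · -- pattern A : (0,1), (2,3); need d02
        rcases h02 with d02 | m02
        · refine ⟨i0, j0, i2, j2, hij0, hij2, d02.1, d02.2.1, d02.2.2.1, d02.2.2.2, ?_⟩
          exact build' i0 j0 i2 j2 s0 s2 hs0 hs2 (b 0) (b 1) (b 2) (b 3) hb0
            (by rw [hb1, ← m01.1, ← m01.2.1, show -s0 = s1 by linarith [m01.2.2]])
            hb2
            (by rw [hb3, ← m23.1, ← m23.2.1, show -s2 = s3 by linarith [m23.2.2]])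
        · have hbb : b 1 = b 2 := by
            rw [hb1, hb2, ← m01.1, ← m01.2.1, ← m02.1, ← m02.2.1,
              show s1 = s2 by linarith [m01.2.2, m02.2.2]]
          exact absurd (hdist hbb) (by decide)
  · rintro ⟨i, j, k, l, hij, hkl, hik, hil, hjk, hjl, hset⟩
    set V1 : Fin n → ℝ := Pi.single i 1 + Pi.single j 1 with hV1
    set V2 : Fin n → ℝ := Pi.single i 1 - Pi.single j 1 with hV2
    set V3 : Fin n → ℝ := Pi.single k 1 + Pi.single l 1 with hV3
    set V4 : Fin n → ℝ := Pi.single k 1 - Pi.single l 1 with hV4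
    have d12 : V1 ≠ V2 := by
      intro h; have := congrFun h j
      norm_num [hV1, hV2, Pi.single_apply, hij.ne'] at this
    have d13 : V1 ≠ V3 := by
      intro h; have := congrFun h i
      norm_num [hV1, hV3, Pi.single_apply, hij.ne, hik, hil] at this
    have d14 : V1 ≠ V4 := by
      intro h; have := congrFun h i
      norm_num [hV1, hV4, Pi.single_apply, hij.ne, hik, hil] at this
    have d23 : V2 ≠ V3 := by
      intro h; have := congrFun h i
      norm_num [hV2, hV3, Pi.single_apply, hij.ne, hik, hil] at this
    have d24 : V2 ≠ V4 := by
      intro h; have := congrFun h i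
      norm_num [hV2, hV4, Pi.single_apply, hij.ne, hik, hil] at this
    have d34 : V3 ≠ V4 := by
      intro h; have := congrFun h l
      norm_num [hV3, hV4, Pi.single_apply, hkl.ne'] at this
    have hmem : ∀ m, b m ∈ ({V1, V2, V3, V4} : Set (Fin n → ℝ)) := by
      intro m; rw [← hset]
      fin_cases m <;> simp
    have r1 : V1 = (Pi.single i 1 : Fin n → ℝ) + (1:ℝ) • (Pi.single j 1 : Fin n → ℝ) := by
      rw [hV1]; module
    have r2 : V2 = (Pi.single i 1 : Fin n → ℝ) + (-1:ℝ) • (Pi.single j 1 : Fin n → ℝ) := by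
      rw [hV2]; module
    have r3 : V3 = (Pi.single k 1 : Fin n → ℝ) + (1:ℝ) • (Pi.single l 1 : Fin n → ℝ) := by
      rw [hV3]; module
    have r4 : V4 = (Pi.single k 1 : Fin n → ℝ) + (-1:ℝ) • (Pi.single l 1 : Fin n → ℝ) := by
      rw [hV4]; module
    have sym : ∀ w z : Fin n → ℝ, (∑ x, w x * z x) = ∑ x, z x * w x :=
      fun w z => Finset.sum_congr rfl fun x _ => mul_comm _ _
    have c12 : (∑ x, V1 x * V2 x) = 0 := by
      rw [r1, r2, dot_roots']; norm_num [hij.ne, hij.ne']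
    have c13 : (∑ x, V1 x * V3 x) = 0 := by
      rw [r1, r3, dot_roots']; norm_num [hik, hil, hjk, hjl]
    have c14 : (∑ x, V1 x * V4 x) = 0 := by
      rw [r1, r4, dot_roots']; norm_num [hik, hil, hjk, hjl]
    have c23 : (∑ x, V2 x * V3 x) = 0 := by
      rw [r2, r3, dot_roots']; norm_num [hik, hil, hjk, hjl]
    have c24 : (∑ x, V2 x * V4 x) = 0 := by
      rw [r2, r4, dot_roots']; norm_num [hik, hil, hjk, hjl]
    have c34 : (∑ x, V3 x * V4 x) = 0 := by
      rw [r3, r4, dot_roots']; norm_num [hkl.ne, hkl.ne']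
    constructor
    · intro p q hpq
      have hne : b p ≠ b q := fun h => hpq (hdist h)
      have hp := hmem p
      have hq := hmem q
      simp only [Set.mem_insert_iff, Set.mem_singleton_iff] at hp hq
      rcases hp with hp | hp | hp | hp <;> rcases hq with hq | hq | hq | hq <;>
        first
          | exact absurd (hp.trans hq.symm) hne
          | (rw [hp, hq]
             first
               | exact c12 | exact c13 | exact c14 | exact c23 | exact c24 | exact c34
               | exact (sym _ _).trans c12 | exact (sym _ _).trans c13
               | exact (sym _ _).trans c14 | exact (sym _ _).trans c23
               | exact (sym _ _).trans c24 | exact (sym _ _).trans c34)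
    · refine ⟨Pi.single i 1 + Pi.single k 1, ?_, ?_⟩
      · rw [hΦ]
        rcases lt_or_gt_of_ne hik with h | h
        · exact ⟨i, k, 1, 1, h, Or.inl rfl, Or.inl rfl, by module⟩
        · exact ⟨k, i, 1, 1, h, Or.inl rfl, Or.inl rfl, by module⟩
      · have hrange : Set.range b = ({V1, V2, V3, V4} : Set (Fin n → ℝ)) := by
          rw [← hset]
          ext a
          simp only [Set.mem_range, Set.mem_insert_iff, Set.mem_singleton_iff]
          constructor
          · rintro ⟨m, rfl⟩
            fin_cases m
            · exact Or.inl rfl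
            · exact Or.inr (Or.inl rfl)
            · exact Or.inr (Or.inr (Or.inl rfl))
            · exact Or.inr (Or.inr (Or.inr rfl))
          · rintro (rfl | rfl | rfl | rfl)
            exacts [⟨0, rfl⟩, ⟨1, rfl⟩, ⟨2, rfl⟩, ⟨3, rfl⟩]
        have hImg : (Finset.univ.image b : Finset (Fin n → ℝ))
            = ({V1, V2, V3, V4} : Finset (Fin n → ℝ)) := by
          apply Finset.coe_injective
          rw [Finset.coe_image, Finset.coe_univ, Set.image_univ, hrange]
          simp
        have e1 : (∑ x ∈ Finset.univ.image b, x) = ∑ m, b m :=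
          Finset.sum_image (fun x _ y _ h => hdist h)
        have e2 : (∑ x ∈ ({V1, V2, V3, V4} : Finset (Fin n → ℝ)), x) = V1 + V2 + V3 + V4 := by
          rw [Finset.sum_insert (by simp [d12, d13, d14]),
            Finset.sum_insert (by simp [d23, d24]),
            Finset.sum_insert (by simp [d34]), Finset.sum_singleton]
          abel
        calc b 0 + b 1 + b 2 + b 3 = ∑ m, b m := (Fin.sum_univ_four b).symm
          _ = ∑ x ∈ Finset.univ.image b, x := e1.symm
          _ = V1 + V2 + V3 + V4 := by rw [hImg, e2]
          _ = (2:ℝ) • (Pi.single i 1 + Pi.single k 1) := by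
              rw [hV1, hV2, hV3, hV4]; module
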